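/- arXiv:2210.08797 — 2 statements merged into one kernel-verified Lean document; each statement's English description precedes it below -/
import Mathlib

section
/- Fix an integer k ≥ 1. For every integer r ≥ 0, the probability generating function of the Type I negative binomial waiting time T_{r,k} satisfies, in the ring of formal power series ℝ⟦X⟧, (1 − X + q·p^k·X^{k+1})^r · ∑_{n≥0} P(T_{r,k} = n)·X^n = p^{rk}·X^{rk}·(1 − p·X)^r. -/
open MeasureTheory Finset PowerSeries ProbabilityTheory

/-- Waiting time for the first success run of length `k`: the smallest `n ≥ k` such that
trials `n - k + 1, …, n` are all successes (trials are indexed from `1`). -/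
noncomputable def waitingTime (k : ℕ) (ω : ℕ → Bool) : ℕ :=
  sInf {n | k ≤ n ∧ ∀ i ∈ Finset.Icc (n - k + 1) n, ω i = true}

namespace NB15

open scoped Classical

/-- extend a pattern on positions 1..n (0-indexed by `Fin n`) to all of ℕ by `false`. -/
def ext (n : ℕ) (v : Fin n → Bool) : ℕ → Bool := fun i =>
  if h : 1 ≤ i ∧ i ≤ n then v ⟨i - 1, by omega⟩ else false

lemma ext_apply (n : ℕ) (v : Fin n → Bool) (i : ℕ) (h1 : 1 ≤ i) (h2 : i ≤ n) :
    ext n v i = v ⟨i - 1, by omega⟩ := dif_pos ⟨h1, h2⟩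

lemma ext_apply_fin (n : ℕ) (v : Fin n → Bool) (j : Fin n) :
    ext n v (j.val + 1) = v j := by
  rw [ext_apply n v (j.val + 1) (by omega) (by omega)]
  exact congrArg v (Fin.ext (by simp))

lemma measurable_pattern (A B : ℕ → Prop) (d : ℕ → Bool) :
    MeasurableSet {ω : ℕ → Bool | ∀ i, A i → B i → ω i = d i} := by
  have : {ω : ℕ → Bool | ∀ i, A i → B i → ω i = d i}
      = ⋂ i, ⋂ (_ : A i), ⋂ (_ : B i), (fun ω : ℕ → Bool => ω i) ⁻¹' {d i} := by
    ext ω; simp [Set.mem_iInter]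
  rw [this]
  exact MeasurableSet.iInter fun i => MeasurableSet.iInter fun _ =>
    MeasurableSet.iInter fun _ => (measurable_pi_apply i) (measurableSet_singleton (d i))

variable {p : ℝ}

lemma cyl_eq (μ : Measure (ℕ → Bool))
    (hμ : ∀ (n : ℕ) (b : ℕ → Bool),
      μ {ω | ∀ i, 1 ≤ i → i ≤ n → ω i = b i}
        = ENNReal.ofReal (∏ i ∈ Finset.Icc 1 n, if b i = true then p else 1 - p))
    (n : ℕ) (Q : (ℕ → Bool) → Prop)
    (hQ : ∀ ω ω', (∀ i, 1 ≤ i → i ≤ n → ω i = ω' i) → Q ω → Q ω') :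
    μ {ω | Q ω} = ∑ v ∈ Finset.univ.filter (fun v : Fin n → Bool => Q (ext n v)),
      ENNReal.ofReal (∏ i ∈ Finset.Icc 1 n, if ext n v i = true then p else 1 - p) := by
  classical
  have hset : {ω | Q ω} = ⋃ v ∈ Finset.univ.filter (fun v : Fin n → Bool => Q (ext n v)),
      {ω : ℕ → Bool | ∀ i, 1 ≤ i → i ≤ n → ω i = ext n v i} := by
    ext ω
    simp only [Set.mem_setOf_eq, Set.mem_iUnion, Finset.mem_filter, Finset.mem_univ, true_and,
      Finset.mem_coe]
    constructor
    · intro hQω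
      refine ⟨fun j => ω (j.val + 1), ?_, ?_⟩
      · refine hQ ω _ (fun i h1 h2 => ?_) hQω
        rw [ext_apply n _ i h1 h2]
        show ω i = ω (i - 1 + 1)
        congr 1
        omega
      · intro i h1 h2
        rw [ext_apply n _ i h1 h2]
        show ω i = ω (i - 1 + 1)
        congr 1
        omega
    · rintro ⟨v, hv, hω⟩
      exact hQ (ext n v) ω (fun i h1 h2 => (hω i h1 h2).symm) hv
  rw [hset, measure_biUnion_finset]
  · exact Finset.sum_congr rfl fun v _ => hμ n (ext n v)
  · intro v _ w _ hvw
    simp only [Function.onFun]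
    rw [Set.disjoint_left]
    intro ω h1 h2
    apply hvw
    funext j
    have e1 := h1 (j.val + 1) (by omega) (by omega)
    have e2 := h2 (j.val + 1) (by omega) (by omega)
    rw [ext_apply_fin] at e1 e2
    rw [← e1, ← e2]
  · exact fun v _ => measurable_pattern _ _ _

lemma one_step (hp0 : 0 < p) (hp1 : p < 1) (μ : Measure (ℕ → Bool))
    (hμ : ∀ (n : ℕ) (b : ℕ → Bool),
      μ {ω | ∀ i, 1 ≤ i → i ≤ n → ω i = b i}
        = ENNReal.ofReal (∏ i ∈ Finset.Icc 1 n, if b i = true then p else 1 - p))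
    (n : ℕ) (Q : (ℕ → Bool) → Prop)
    (hQ : ∀ ω ω', (∀ i, 1 ≤ i → i ≤ n → ω i = ω' i) → Q ω → Q ω') (b : Bool) :
    μ {ω | Q ω ∧ ω (n + 1) = b}
      = μ {ω | Q ω} * ENNReal.ofReal (if b = true then p else 1 - p) := by
  classical
  have wnn : ∀ c : Bool, (0 : ℝ) ≤ (if c = true then p else 1 - p) := by
    intro c; split <;> [linarith; linarith]
  have prodnn : ∀ (m : ℕ) (d : ℕ → Bool),
      (0:ℝ) ≤ ∏ i ∈ Finset.Icc 1 m, if d i = true then p else 1 - p :=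
    fun m d => Finset.prod_nonneg fun i _ => wnn (d i)
  have hQ' : ∀ ω ω', (∀ i, 1 ≤ i → i ≤ n + 1 → ω i = ω' i) →
      (Q ω ∧ ω (n+1) = b) → (Q ω' ∧ ω' (n+1) = b) := by
    rintro ω ω' h ⟨h1, h2⟩
    exact ⟨hQ ω ω' (fun i hi1 hi2 => h i hi1 (by omega)) h1,
      by rw [← h (n+1) (by omega) (le_refl _)]; exact h2⟩
  rw [cyl_eq μ hμ (n+1) _ hQ', cyl_eq μ hμ n Q hQ, Finset.sum_mul]
  refine Finset.sum_nbij' (fun v : Fin (n+1) → Bool => fun j : Fin n => v j.castSucc)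
    (fun u : Fin n → Bool => Fin.snoc u b) ?_ ?_ ?_ ?_ ?_
  · -- maps filter to filter
    intro v hv
    simp only [Finset.mem_filter, Finset.mem_univ, true_and] at hv ⊢
    refine hQ _ _ (fun i h1 h2 => ?_) hv.1
    rw [ext_apply _ _ i h1 (by omega), ext_apply _ _ i h1 h2]
    rfl
  · intro u hu
    simp only [Finset.mem_filter, Finset.mem_univ, true_and] at hu ⊢
    constructor
    · refine hQ _ _ (fun i h1 h2 => ?_) hu
      rw [ext_apply _ _ i h1 h2, ext_apply _ _ i h1 (by omega)]
      have : (⟨i - 1, by omega⟩ : Fin (n+1)) = Fin.castSucc ⟨i - 1, by omega⟩ := rfl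
      rw [this, Fin.snoc_castSucc]
    · rw [ext_apply _ _ (n+1) (by omega) (le_refl _)]
      have : (⟨n + 1 - 1, by omega⟩ : Fin (n+1)) = Fin.last n := Fin.ext (by simp)
      rw [this, Fin.snoc_last]
  · intro v hv
    simp only [Finset.mem_filter, Finset.mem_univ, true_and] at hv
    funext j
    refine Fin.lastCases ?_ (fun i => ?_) j
    · rw [Fin.snoc_last]
      have := hv.2
      rw [ext_apply _ _ (n+1) (by omega) (le_refl _)] at this
      have e : (⟨n + 1 - 1, by omega⟩ : Fin (n+1)) = Fin.last n := Fin.ext (by simp)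
      rw [e] at this
      exact this.symm
    · rw [Fin.snoc_castSucc]
  · intro u _
    funext j
    rw [Fin.snoc_castSucc]
  · intro v hv
    simp only [Finset.mem_filter, Finset.mem_univ, true_and] at hv
    rw [← ENNReal.ofReal_mul (prodnn _ _)]
    congr 1
    rw [Finset.prod_Icc_succ_top (by omega : 1 ≤ n + 1)]
    have e1 : ∀ i ∈ Finset.Icc 1 n,
        (if ext (n+1) v i = true then p else 1 - p)
          = (if ext n (fun j : Fin n => v j.castSucc) i = true then p else 1 - p) := by
      intro i hi
      rw [Finset.mem_Icc] at hi
      rw [ext_apply _ _ i hi.1 hi.2, ext_apply _ _ i hi.1 (by omega)]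
      rfl
    rw [Finset.prod_congr rfl e1]
    have e2 : ext (n+1) v (n+1) = b := by
      rw [ext_apply _ _ (n+1) (by omega) (le_refl _)]
      have e : (⟨n + 1 - 1, by omega⟩ : Fin (n+1)) = Fin.last n := Fin.ext (by simp)
      rw [e]
      have := hv.2
      rw [ext_apply _ _ (n+1) (by omega) (le_refl _), e] at this
      exact this
    rw [e2]

lemma split (hp0 : 0 < p) (hp1 : p < 1) (μ : Measure (ℕ → Bool))
    (hμ : ∀ (n : ℕ) (b : ℕ → Bool),
      μ {ω | ∀ i, 1 ≤ i → i ≤ n → ω i = b i}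
        = ENNReal.ofReal (∏ i ∈ Finset.Icc 1 n, if b i = true then p else 1 - p))
    (m : ℕ) (Q : (ℕ → Bool) → Prop)
    (hQ : ∀ ω ω', (∀ i, 1 ≤ i → i ≤ m → ω i = ω' i) → Q ω → Q ω') :
    ∀ n, m ≤ n → ∀ d : ℕ → Bool,
    μ {ω | Q ω ∧ ∀ i, m < i → i ≤ n → ω i = d i}
      = μ {ω | Q ω} * ENNReal.ofReal (∏ i ∈ Finset.Ioc m n, if d i = true then p else 1 - p) := by
  intro n hn
  induction n, hn using Nat.le_induction with
  | base =>
    intro d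
    simp only [Finset.Ioc_self, Finset.prod_empty, ENNReal.ofReal_one, mul_one]
    congr 1
    ext ω
    simp only [Set.mem_setOf_eq, and_iff_left_iff_imp]
    intro _ i h1 h2
    omega
  | succ n hn ih =>
    intro d
    have hset : {ω : ℕ → Bool | Q ω ∧ ∀ i, m < i → i ≤ n + 1 → ω i = d i}
        = {ω : ℕ → Bool | (Q ω ∧ ∀ i, m < i → i ≤ n → ω i = d i) ∧ ω (n+1) = d (n+1)} := by
      ext ω
      simp only [Set.mem_setOf_eq]
      constructor
      · rintro ⟨h1, h2⟩
        exact ⟨⟨h1, fun i hi1 hi2 => h2 i hi1 (by omega)⟩, h2 (n+1) (by omega) (le_refl _)⟩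
      · rintro ⟨⟨h1, h2⟩, h3⟩
        refine ⟨h1, fun i hi1 hi2 => ?_⟩
        rcases eq_or_lt_of_le hi2 with h | h
        · rw [h]; exact h3
        · exact h2 i hi1 (by omega)
    rw [hset, one_step hp0 hp1 μ hμ n _ ?_ (d (n+1)), ih d,
      Finset.prod_Ioc_succ_top hn, mul_assoc,
      ← ENNReal.ofReal_mul (Finset.prod_nonneg fun i _ => by split <;> [linarith; linarith])]
    rintro ω ω' h ⟨h1, h2⟩
    exact ⟨hQ ω ω' (fun i hi1 hi2 => h i hi1 (by omega)) h1,
      fun i hi1 hi2 => by rw [← h i (by omega) hi2]; exact h2 i hi1 hi2⟩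

/-- No success-run of length `k` ends at any position `j ≤ m`. -/
def NoRun (k m : ℕ) (ω : ℕ → Bool) : Prop :=
  ∀ j, k ≤ j → j ≤ m → ¬ ∀ i ∈ Finset.Icc (j - k + 1) j, ω i = true

lemma noRun_inv (k m : ℕ) : ∀ ω ω', (∀ i, 1 ≤ i → i ≤ m → ω i = ω' i) →
    NoRun k m ω → NoRun k m ω' := by
  intro ω ω' hag h j hj1 hj2 hall
  refine h j hj1 hj2 (fun i hi => ?_)
  rw [Finset.mem_Icc] at hi
  rw [hag i (by omega) (by omega)]
  exact hall i (Finset.mem_Icc.mpr hi)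

lemma noRun_measurable (k m : ℕ) : MeasurableSet {ω : ℕ → Bool | NoRun k m ω} := by
  have : {ω : ℕ → Bool | NoRun k m ω}
      = ⋂ j, ⋂ (_ : k ≤ j), ⋂ (_ : j ≤ m),
        ({ω : ℕ → Bool | ∀ i, j - k + 1 ≤ i → i ≤ j → ω i = (fun _ => true) i})ᶜ := by
    ext ω
    simp only [NoRun, Set.mem_setOf_eq, Set.mem_iInter, Set.mem_compl_iff]
    constructor
    · intro h j hj1 hj2 hall
      exact h j hj1 hj2 fun i hi => hall i (Finset.mem_Icc.mp hi).1 (Finset.mem_Icc.mp hi).2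
    · intro h j hj1 hj2 hall
      exact h j hj1 hj2 fun i hi1 hi2 => hall i (Finset.mem_Icc.mpr ⟨hi1, hi2⟩)
  rw [this]
  exact MeasurableSet.iInter fun j => MeasurableSet.iInter fun _ =>
    MeasurableSet.iInter fun _ => (measurable_pattern _ _ _).compl

lemma noRun_mono (k m m' : ℕ) (h : m ≤ m') (ω : ℕ → Bool) (hm' : NoRun k m' ω) :
    NoRun k m ω := fun j hj1 hj2 => hm' j hj1 (by omega)

lemma noRun_small (k m : ℕ) (h : m < k) (ω : ℕ → Bool) : NoRun k m ω :=
  fun j hj1 hj2 => absurd (le_trans hj1 hj2) (by omega)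

lemma wt_eq_iff (k : ℕ) (ω : ℕ → Bool) (n : ℕ) (hn : 1 ≤ n) :
    waitingTime k ω = n ↔
      (n ∈ {m | k ≤ m ∧ ∀ i ∈ Finset.Icc (m - k + 1) m, ω i = true}) ∧
      ∀ j < n, j ∉ {m | k ≤ m ∧ ∀ i ∈ Finset.Icc (m - k + 1) m, ω i = true} := by
  set S := {m | k ≤ m ∧ ∀ i ∈ Finset.Icc (m - k + 1) m, ω i = true} with hS
  constructor
  · intro h
    have hne : S.Nonempty := by
      by_contra hemp
      rw [Set.not_nonempty_iff_eq_empty] at hemp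
      rw [waitingTime, ← hS, hemp, Nat.sInf_empty] at h
      omega
    have hmem : sInf S ∈ S := Nat.sInf_mem hne
    rw [waitingTime, ← hS] at h
    exact ⟨h ▸ hmem, fun j hj => Nat.notMem_of_lt_sInf (h ▸ hj)⟩
  · rintro ⟨h1, h2⟩
    rw [waitingTime, ← hS]
    refine le_antisymm (Nat.sInf_le h1) ?_
    by_contra hlt
    push_neg at hlt
    exact h2 _ hlt (Nat.sInf_mem ⟨n, h1⟩)

lemma L0 (k : ℕ) (hk : 1 ≤ k) (m : ℕ) :
    {ω : ℕ → Bool | waitingTime k ω = 0} ⊆ {ω | NoRun k m ω} := by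
  intro ω h
  simp only [Set.mem_setOf_eq] at h ⊢
  intro j hj1 hj2 hall
  -- j ∈ S, so S ≠ ∅, so sInf S ∈ S, so k ≤ sInf S = 0, contradiction
  have hjS : j ∈ {m | k ≤ m ∧ ∀ i ∈ Finset.Icc (m - k + 1) m, ω i = true} := ⟨hj1, hall⟩
  have := Nat.sInf_mem ⟨j, hjS⟩
  rw [waitingTime] at h
  rw [h] at this
  exact absurd this.1 (by omega)

lemma L1 (k : ℕ) (hk : 1 ≤ k) (m : ℕ) (hm : 1 ≤ m) :
    {ω : ℕ → Bool | waitingTime k ω = m}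
      = {ω | NoRun k (m-1) ω} \ {ω | NoRun k m ω} := by
  ext ω
  simp only [Set.mem_setOf_eq, Set.mem_diff]
  rw [wt_eq_iff k ω m hm]
  constructor
  · rintro ⟨⟨hkm, hrun⟩, hmin⟩
    constructor
    · intro j hj1 hj2 hall
      exact hmin j (by omega) ⟨hj1, hall⟩
    · intro hnr
      exact hnr m hkm (le_refl m) hrun
  · rintro ⟨hnr, hnnr⟩
    rw [NoRun] at hnnr
    push_neg at hnnr
    obtain ⟨j, hj1, hj2, hall⟩ := hnnr
    have hjm : j = m := by
      by_contra hne
      exact (hnr j hj1 (by omega)) hall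
    subst hjm
    refine ⟨⟨hj1, hall⟩, fun j' hj' hmem => ?_⟩
    exact hnr j' hmem.1 (by omega) hmem.2

lemma L3 (k : ℕ) (hk : 1 ≤ k) :
    {ω : ℕ → Bool | waitingTime k ω = k}
      = {ω | ∀ i, 1 ≤ i → i ≤ k → ω i = (fun _ => true) i} := by
  ext ω
  simp only [Set.mem_setOf_eq]
  rw [wt_eq_iff k ω k hk]
  constructor
  · rintro ⟨⟨_, hrun⟩, _⟩
    intro i h1 h2
    exact hrun i (Finset.mem_Icc.mpr ⟨by omega, h2⟩)
  · intro h
    refine ⟨⟨le_refl k, fun i hi => ?_⟩, fun j hj hmem => ?_⟩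
    · rw [Finset.mem_Icc] at hi
      exact h i (by omega) hi.2
    · exact absurd hmem.1 (by omega)

lemma L2 (k : ℕ) (hk : 1 ≤ k) (n : ℕ) (hn : k + 1 ≤ n) :
    {ω : ℕ → Bool | waitingTime k ω = n}
      = {ω | NoRun k (n-k-1) ω ∧ ∀ i, n-k-1 < i → i ≤ n →
          ω i = (fun i => if i = n - k then false else true) i} := by
  ext ω
  simp only [Set.mem_setOf_eq]
  rw [wt_eq_iff k ω n (by omega)]
  constructor
  · rintro ⟨⟨hkn, hrun⟩, hmin⟩
    have hfalse : ω (n - k) = false := by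
      by_contra htrue
      rw [Bool.not_eq_false] at htrue
      -- then there is a run ending at n-1
      refine hmin (n-1) (by omega) ⟨by omega, fun i hi => ?_⟩
      rw [Finset.mem_Icc] at hi
      rcases Nat.eq_or_lt_of_le hi.1 with h | h
      · have : i = n - k := by omega
        rw [this]; exact htrue
      · exact hrun i (Finset.mem_Icc.mpr ⟨by omega, by omega⟩)
    constructor
    · intro j hj1 hj2 hall
      exact hmin j (by omega) ⟨hj1, hall⟩
    · intro i hi1 hi2
      by_cases hie : i = n - k
      · rw [hie, if_pos rfl]; exact hfalse
      · rw [if_neg hie]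
        exact hrun i (Finset.mem_Icc.mpr ⟨by omega, hi2⟩)
  · rintro ⟨hnr, hpat⟩
    have hrun : ∀ i ∈ Finset.Icc (n - k + 1) n, ω i = true := by
      intro i hi
      rw [Finset.mem_Icc] at hi
      have := hpat i (by omega) hi.2
      rwa [if_neg (by omega)] at this
    refine ⟨⟨by omega, hrun⟩, fun j hj hmem => ?_⟩
    obtain ⟨hkj, hallj⟩ := hmem
    by_cases hsmall : j ≤ n - k - 1
    · exact hnr j hkj hsmall hallj
    · -- n - k ≤ j ≤ n - 1, so the run ending at j covers n - k, where ω is false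
      have hωnk : ω (n - k) = false := by
        have := hpat (n - k) (by omega) (by omega)
        rwa [if_pos rfl] at this
      have := hallj (n - k) (Finset.mem_Icc.mpr ⟨by omega, by omega⟩)
      rw [hωnk] at this
      exact absurd this (by simp)

lemma L5 (k : ℕ) (hk : 1 ≤ k) (m : ℕ) (ω : ℕ → Bool) (h : NoRun k (m + k) ω) :
    ¬ ∀ i, m < i → i ≤ m + k → ω i = (fun _ => true) i := by
  intro hpat
  refine h (m + k) (by omega) (le_refl _) (fun i hi => ?_)
  rw [Finset.mem_Icc] at hi
  exact hpat i (by omega) hi.2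

section MeasureFacts

variable {p : ℝ} (hp0 : 0 < p) (hp1 : p < 1) (k : ℕ) (hk : 1 ≤ k)
    (μ : Measure (ℕ → Bool)) [IsProbabilityMeasure μ]
    (hμ : ∀ (n : ℕ) (b : ℕ → Bool),
      μ {ω | ∀ i, 1 ≤ i → i ≤ n → ω i = b i}
        = ENNReal.ofReal (∏ i ∈ Finset.Icc 1 n, if b i = true then p else 1 - p))

include hp0 hp1 hk hμ

lemma M2 : μ {ω | waitingTime k ω = k} = ENNReal.ofReal (p ^ k) := by
  rw [L3 k hk, hμ k (fun _ => true)]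
  congr 1
  simp [Nat.card_Icc]

lemma M1 (n : ℕ) (h1 : 1 ≤ n) (h2 : n < k) : μ {ω | waitingTime k ω = n} = 0 := by
  have : {ω : ℕ → Bool | waitingTime k ω = n} = ∅ := by
    ext ω
    simp only [Set.mem_setOf_eq, Set.mem_empty_iff_false, iff_false]
    intro h
    rw [wt_eq_iff k ω n h1] at h
    exact absurd h.1.1 (by omega)
  rw [this, measure_empty]

lemma M4 (m : ℕ) (hm : 1 ≤ m) :
    μ {ω | waitingTime k ω = m}
      = μ {ω | NoRun k (m-1) ω} - μ {ω | NoRun k m ω} := by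
  rw [L1 k hk m hm]
  refine measure_diff ?_ (noRun_measurable k m).nullMeasurableSet (measure_ne_top μ _)
  intro ω h
  exact noRun_mono k (m-1) m (by omega) ω h

lemma M4' (m : ℕ) : μ {ω | NoRun k (m+1) ω} ≤ μ {ω | NoRun k m ω} :=
  measure_mono fun ω h => noRun_mono k m (m+1) (by omega) ω h

lemma M3 (n : ℕ) (hn : k + 1 ≤ n) :
    μ {ω | waitingTime k ω = n}
      = μ {ω | NoRun k (n-k-1) ω} * ENNReal.ofReal ((1 - p) * p ^ k) := by
  rw [L2 k hk n hn,
    split hp0 hp1 μ hμ (n-k-1) (NoRun k (n-k-1)) (noRun_inv k (n-k-1)) n (by omega)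
      (fun i => if i = n - k then false else true)]
  congr 2
  rw [← Finset.prod_Ioc_consecutive
    (fun i => if (if i = n - k then false else true) = true then p else 1 - p)
    (show n-k-1 ≤ n-k by omega) (show n-k ≤ n by omega)]
  have h1 : Finset.Ioc (n-k-1) (n-k) = {n-k} := by
    ext i
    simp only [Finset.mem_Ioc, Finset.mem_singleton]
    omega
  rw [h1, Finset.prod_singleton]
  have h2 : ∀ i ∈ Finset.Ioc (n-k) n,
      (if (if i = n - k then false else true) = true then p else 1 - p) = p := by
    intro i hi
    rw [Finset.mem_Ioc] at hi
    rw [if_neg (show i ≠ n - k by omega), if_pos rfl]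
  rw [Finset.prod_congr rfl h2, Finset.prod_const, Nat.card_Ioc]
  have h3 : n - (n - k) = k := by omega
  rw [h3, if_pos rfl]
  norm_num

lemma Mbound (m : ℕ) :
    μ {ω | NoRun k (m + k) ω}
      ≤ μ {ω | NoRun k m ω} - μ {ω | NoRun k m ω} * ENNReal.ofReal (p ^ k) := by
  set B : Set (ℕ → Bool) :=
    {ω | NoRun k m ω ∧ ∀ i, m < i → i ≤ m + k → ω i = (fun _ => true) i} with hB
  have hBmeas : MeasurableSet B := by
    have : B = {ω | NoRun k m ω} ∩ {ω : ℕ → Bool | ∀ i, m < i → i ≤ m + k → ω i = true} := rfl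
    rw [this]
    exact (noRun_measurable k m).inter (measurable_pattern _ _ _)
  have hBsub : B ⊆ {ω | NoRun k m ω} := fun ω h => h.1
  have hBval : μ B = μ {ω | NoRun k m ω} * ENNReal.ofReal (p ^ k) := by
    rw [hB, split hp0 hp1 μ hμ m (NoRun k m) (noRun_inv k m) (m+k) (by omega) (fun _ => true)]
    congr 2
    simp [Nat.card_Ioc]
  have hsub : {ω : ℕ → Bool | NoRun k (m + k) ω} ⊆ {ω | NoRun k m ω} \ B := by
    intro ω h
    refine ⟨noRun_mono k m (m+k) (by omega) ω h, fun hBω => ?_⟩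
    exact L5 k hk m ω h hBω.2
  calc μ {ω | NoRun k (m + k) ω} ≤ μ ({ω | NoRun k m ω} \ B) := measure_mono hsub
    _ = μ {ω | NoRun k m ω} - μ B :=
        measure_diff hBsub hBmeas.nullMeasurableSet (measure_ne_top μ _)
    _ = _ := by rw [hBval]

lemma Mdecay : ∀ j : ℕ, (μ {ω | NoRun k (j * k) ω}).toReal ≤ (1 - p ^ k) ^ j := by
  have hpk0 : 0 < p ^ k := pow_pos hp0 k
  have hpk1 : p ^ k ≤ 1 := pow_le_one₀ (le_of_lt hp0) (le_of_lt hp1)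
  intro j
  induction j with
  | zero =>
    have : {ω : ℕ → Bool | NoRun k (0 * k) ω} = Set.univ := by
      ext ω
      simp only [Set.mem_setOf_eq, Set.mem_univ, iff_true]
      exact noRun_small k _ (by omega) ω
    rw [this, measure_univ]
    norm_num
  | succ j ih =>
    have hidx : (j + 1) * k = j * k + k := by ring
    rw [hidx]
    have hb := Mbound hp0 hp1 k hk μ hμ (j * k)
    set a := μ {ω | NoRun k (j * k) ω} with ha
    have hane : a ≠ ⊤ := measure_ne_top μ _
    have hle : a * ENNReal.ofReal (p ^ k) ≤ a := by
      calc a * ENNReal.ofReal (p ^ k) ≤ a * 1 :=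
            mul_le_mul_right (ENNReal.ofReal_le_one.mpr hpk1) a
        _ = a := mul_one a
    have h1 : (μ {ω | NoRun k (j * k + k) ω}).toReal
        ≤ (a - a * ENNReal.ofReal (p ^ k)).toReal :=
      ENNReal.toReal_mono (by
        refine ne_top_of_le_ne_top hane ?_
        exact le_trans tsub_le_self (le_refl a)) hb
    rw [ENNReal.toReal_sub_of_le hle hane, ENNReal.toReal_mul,
      ENNReal.toReal_ofReal (le_of_lt hpk0)] at h1
    have h2 : a.toReal - a.toReal * p ^ k = a.toReal * (1 - p ^ k) := by ring
    rw [h2] at h1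
    calc (μ {ω | NoRun k (j * k + k) ω}).toReal ≤ a.toReal * (1 - p ^ k) := h1
      _ ≤ (1 - p ^ k) ^ j * (1 - p ^ k) :=
          mul_le_mul_of_nonneg_right ih (by linarith)
      _ = (1 - p ^ k) ^ (j + 1) := by ring

lemma M0 : μ {ω | waitingTime k ω = 0} = 0 := by
  have hpk0 : 0 < p ^ k := pow_pos hp0 k
  have hpk1 : p ^ k ≤ 1 := pow_le_one₀ (le_of_lt hp0) (le_of_lt hp1)
  have hub : ∀ j : ℕ, (μ {ω | waitingTime k ω = 0}).toReal ≤ (1 - p ^ k) ^ j := by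
    intro j
    refine le_trans ?_ (Mdecay hp0 hp1 k hk μ hμ j)
    exact ENNReal.toReal_mono (measure_ne_top μ _) (measure_mono (L0 k hk (j * k)))
  have hlim : Filter.Tendsto (fun j : ℕ => (1 - p ^ k) ^ j) Filter.atTop (nhds 0) :=
    tendsto_pow_atTop_nhds_zero_of_lt_one (by linarith) (by linarith)
  have h0 : (μ {ω | waitingTime k ω = 0}).toReal ≤ 0 := ge_of_tendsto' hlim hub
  have h1 : (μ {ω | waitingTime k ω = 0}).toReal = 0 :=
    le_antisymm h0 ENNReal.toReal_nonneg
  rcases (ENNReal.toReal_eq_zero_iff _).mp h1 with h | h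
  · exact h
  · exact absurd h (measure_ne_top μ _)

end MeasureFacts

section Base

variable {p : ℝ} (hp0 : 0 < p) (hp1 : p < 1) (k : ℕ) (hk : 1 ≤ k)
    (μ : Measure (ℕ → Bool)) [IsProbabilityMeasure μ]
    (hμ : ∀ (n : ℕ) (b : ℕ → Bool),
      μ {ω | ∀ i, 1 ≤ i → i ≤ n → ω i = b i}
        = ENNReal.ofReal (∏ i ∈ Finset.Icc 1 n, if b i = true then p else 1 - p))

include hp0 hp1 hk hμ

lemma base :
    (1 - PowerSeries.X + PowerSeries.C (R := ℝ) ((1 - p) * p ^ k) * PowerSeries.X ^ (k + 1)) *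
        PowerSeries.mk (fun n => (μ {ω | waitingTime k ω = n}).toReal)
      = PowerSeries.C (R := ℝ) (p ^ k) * PowerSeries.X ^ k
          * (1 - PowerSeries.C (R := ℝ) p * PowerSeries.X) := by
  have hpk0 : 0 ≤ p ^ k := le_of_lt (pow_pos hp0 k)
  have hq0 : (0:ℝ) ≤ (1 - p) * p ^ k := mul_nonneg (by linarith) hpk0
  set aR : ℕ → ℝ := fun n => (μ {ω | waitingTime k ω = n}).toReal with haR
  set cR : ℕ → ℝ := fun m => (μ {ω | NoRun k m ω}).toReal with hcR
  have ra0 : aR 0 = 0 := by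
    show (μ {ω | waitingTime k ω = 0}).toReal = 0
    rw [M0 hp0 hp1 k hk μ hμ]; rfl
  have ralow : ∀ n, n < k → aR n = 0 := by
    intro n h2
    rcases Nat.eq_zero_or_pos n with h | h
    · rw [h]; exact ra0
    · show (μ {ω | waitingTime k ω = n}).toReal = 0
      rw [M1 hp0 hp1 k hk μ hμ n h h2]; rfl
  have rak : aR k = p ^ k := by
    show (μ {ω | waitingTime k ω = k}).toReal = p ^ k
    rw [M2 hp0 hp1 k hk μ hμ]; exact ENNReal.toReal_ofReal hpk0
  have ra3 : ∀ n, k + 1 ≤ n → aR n = cR (n-k-1) * ((1 - p) * p ^ k) := by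
    intro n hn
    show (μ {ω | waitingTime k ω = n}).toReal = _
    rw [M3 hp0 hp1 k hk μ hμ n hn, ENNReal.toReal_mul, ENNReal.toReal_ofReal hq0]
  have ra4 : ∀ m, 1 ≤ m → aR m = cR (m-1) - cR m := by
    intro m hm
    show (μ {ω | waitingTime k ω = m}).toReal = _
    rw [M4 hp0 hp1 k hk μ hμ m hm]
    have hle : μ {ω | NoRun k m ω} ≤ μ {ω | NoRun k (m-1) ω} :=
      measure_mono (fun ω h => noRun_mono k (m-1) m (by omega) ω h)
    rw [ENNReal.toReal_sub_of_le hle (measure_ne_top μ _)]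
  have rc0 : cR 0 = 1 := by
    show (μ {ω | NoRun k 0 ω}).toReal = 1
    have : {ω : ℕ → Bool | NoRun k 0 ω} = Set.univ := by
      ext ω
      simp only [Set.mem_setOf_eq, Set.mem_univ, iff_true]
      exact noRun_small k 0 (by omega) ω
    rw [this, measure_univ]; rfl
  ext n
  have expand : (1 - PowerSeries.X
        + PowerSeries.C (R := ℝ) ((1 - p) * p ^ k) * PowerSeries.X ^ (k + 1)) *
        PowerSeries.mk aR
      = PowerSeries.mk aR - PowerSeries.X * PowerSeries.mk aR
        + PowerSeries.C (R := ℝ) ((1 - p) * p ^ k) * PowerSeries.X ^ (k + 1)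
          * PowerSeries.mk aR := by ring
  have hX : (coeff (R := ℝ) n) (PowerSeries.X * PowerSeries.mk aR)
      = if 1 ≤ n then aR (n-1) else 0 := by
    rw [show (PowerSeries.X : ℝ⟦X⟧) = PowerSeries.X ^ 1 by rw [pow_one],
      PowerSeries.coeff_X_pow_mul']
    exact if_congr Iff.rfl (PowerSeries.coeff_mk _ _) rfl
  have hXk : (coeff (R := ℝ) n) (PowerSeries.C (R := ℝ) ((1 - p) * p ^ k) * PowerSeries.X ^ (k+1)
        * PowerSeries.mk aR)
      = (1 - p) * p ^ k * (if k + 1 ≤ n then aR (n-k-1) else 0) := by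
    rw [mul_assoc, PowerSeries.coeff_C_mul, PowerSeries.coeff_X_pow_mul']
    refine congrArg _ (if_congr Iff.rfl ?_ rfl)
    rw [PowerSeries.coeff_mk]
    exact congrArg aR (by omega)
  have hRHS : (PowerSeries.C (R := ℝ) (p ^ k) * PowerSeries.X ^ k
        * (1 - PowerSeries.C (R := ℝ) p * PowerSeries.X))
      = PowerSeries.C (R := ℝ) (p ^ k) * PowerSeries.X ^ k
        - PowerSeries.C (R := ℝ) (p ^ (k+1)) * PowerSeries.X ^ (k+1) := by
    rw [pow_succ (p) k, map_mul, pow_succ (PowerSeries.X : ℝ⟦X⟧) k]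
    ring
  have hCX : ∀ m, (coeff (R := ℝ) n) (PowerSeries.C (R := ℝ) (p ^ m) * PowerSeries.X ^ m)
      = if n = m then p ^ m else 0 := by
    intro m
    rw [PowerSeries.coeff_C_mul, PowerSeries.coeff_X_pow]
    split <;> simp
  rw [expand, map_add, map_sub, hX, hXk, PowerSeries.coeff_mk, hRHS, map_sub, hCX, hCX]
  rcases lt_trichotomy n k with hnk | hnk | hnk
  · rw [if_neg (show ¬ n = k by omega), if_neg (show ¬ n = k + 1 by omega),
      if_neg (show ¬ k + 1 ≤ n by omega), ralow n hnk]
    rcases Nat.eq_zero_or_pos n with h | h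
    · rw [h, if_neg (show ¬ 1 ≤ 0 by omega)]
      ring
    · rw [if_pos (show 1 ≤ n by omega), ralow (n-1) (by omega)]
      ring
  · subst hnk
    rw [if_pos rfl, if_neg (show ¬ n = n + 1 by omega), if_neg (show ¬ n + 1 ≤ n by omega),
      if_pos (show 1 ≤ n by omega), rak, ralow (n-1) (by omega)]
    ring
  · rcases Nat.eq_or_lt_of_le (show k + 1 ≤ n by omega) with hnk1 | hnk1
    · rw [if_neg (show ¬ n = k by omega), if_pos (show n = k + 1 by omega),
        if_pos (show k + 1 ≤ n by omega), if_pos (show 1 ≤ n by omega),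
        ra3 n (by omega), show n - 1 = k from by omega, show n - k - 1 = 0 from by omega,
        rak, ra0, rc0]
      rw [pow_succ p k]
      ring
    · rw [if_neg (show ¬ n = k by omega), if_neg (show ¬ n = k + 1 by omega),
        if_pos (show k + 1 ≤ n by omega), if_pos (show 1 ≤ n by omega),
        ra3 n (by omega), ra3 (n-1) (by omega), ra4 (n-k-1) (by omega),
        show n - 1 - k - 1 = n - k - 2 from by omega,
        show n - k - 1 - 1 = n - k - 2 from by omega]
      ring

end Base

lemma conv {Ω : Type*} [MeasurableSpace Ω] (P : Measure Ω)
    (Y : ℕ → Ω → ℕ) (hYmeas : ∀ i, Measurable (Y i))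
    (hYindep : iIndepFun Y P) (r n : ℕ) :
    P {ω | ∑ i ∈ Finset.range (r+1), Y i ω = n}
      = ∑ j ∈ Finset.range (n+1),
          P {ω | ∑ i ∈ Finset.range r, Y i ω = j} * P {ω | Y r ω = n - j} := by
  classical
  have hS : Measurable (fun ω => ∑ i ∈ Finset.range r, Y i ω) :=
    Finset.measurable_sum _ (fun i _ => hYmeas i)
  have hind : IndepFun (fun ω => ∑ i ∈ Finset.range r, Y i ω) (Y r) P := by
    have h := hYindep.indepFun_finsetSum_of_notMem hYmeas
      (by simp : r ∉ Finset.range r)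
    have e : (∑ i ∈ Finset.range r, Y i) = fun ω => ∑ i ∈ Finset.range r, Y i ω := by
      funext ω
      simp
    rw [e] at h
    exact h
  have hset : {ω | ∑ i ∈ Finset.range (r+1), Y i ω = n}
      = ⋃ j ∈ Finset.range (n+1),
          ({ω | ∑ i ∈ Finset.range r, Y i ω = j} ∩ {ω | Y r ω = n - j}) := by
    ext ω
    simp only [Set.mem_setOf_eq, Set.mem_iUnion, Finset.mem_range, Set.mem_inter_iff,
      Finset.mem_coe]
    rw [Finset.sum_range_succ]
    constructor
    · intro h
      exact ⟨∑ i ∈ Finset.range r, Y i ω, by omega, rfl, by omega⟩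
    · rintro ⟨j, hj, h1, h2⟩
      omega
  rw [hset, measure_biUnion_finset]
  · exact Finset.sum_congr rfl fun j hj =>
      hind.measure_inter_preimage_eq_mul {j} {n-j} (measurableSet_singleton j)
        (measurableSet_singleton (n-j))
  · intro a _ b _ hab
    simp only [Function.onFun]
    rw [Set.disjoint_left]
    rintro ω ⟨h1, _⟩ ⟨h2, _⟩
    exact hab (h1 ▸ h2 ▸ rfl)
  · exact fun j _ => (hS (measurableSet_singleton j)).inter
      ((hYmeas r) (measurableSet_singleton _))

end NB15

theorem stmt15 (p : ℝ) (hp0 : 0 < p) (hp1 : p < 1) (k : ℕ) (hk : 1 ≤ k)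
    (μ : Measure (ℕ → Bool)) [IsProbabilityMeasure μ]
    (hμ : ∀ (n : ℕ) (b : ℕ → Bool),
      μ {ω | ∀ i, 1 ≤ i → i ≤ n → ω i = b i}
        = ENNReal.ofReal (∏ i ∈ Finset.Icc 1 n, if b i = true then p else 1 - p))
    -- `Y 0, Y 1, …` are independent random variables, each distributed as `V(k)`;
    -- `T r = Y 0 + ⋯ + Y (r-1)` is the Type I negative binomial waiting time, `T 0 = 0`.
    {Ω : Type*} [MeasurableSpace Ω] (P : Measure Ω) [IsProbabilityMeasure P]
    (Y : ℕ → Ω → ℕ) (hYmeas : ∀ i, Measurable (Y i))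
    (hYindep : iIndepFun Y P)
    (hYdist : ∀ (i n : ℕ), P {ω | Y i ω = n} = μ {ω | waitingTime k ω = n}) :
    ∀ r : ℕ,
      (1 - PowerSeries.X
          + PowerSeries.C (R := ℝ) ((1 - p) * p ^ k) * PowerSeries.X ^ (k + 1)) ^ r *
        PowerSeries.mk (fun n => (P {ω | ∑ i ∈ Finset.range r, Y i ω = n}).toReal)
      = PowerSeries.C (R := ℝ) (p ^ (r * k)) * PowerSeries.X ^ (r * k)
          * (1 - PowerSeries.C (R := ℝ) p * PowerSeries.X) ^ r := by
  intro r
  induction r with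
  | zero =>
    have hmk1 : PowerSeries.mk
        (fun n => (P {ω | ∑ i ∈ Finset.range 0, Y i ω = n}).toReal) = 1 := by
      ext n
      rw [PowerSeries.coeff_mk, PowerSeries.coeff_one]
      rcases Nat.eq_zero_or_pos n with h | h
      · subst h
        have : {ω : Ω | ∑ i ∈ Finset.range 0, Y i ω = 0} = Set.univ := by
          ext ω; simp
        rw [this, measure_univ, if_pos rfl]
        rfl
      · have : {ω : Ω | ∑ i ∈ Finset.range 0, Y i ω = n} = ∅ := by
          ext ω; simp; omega
        rw [this, measure_empty, if_neg (by omega)]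
        rfl
    rw [hmk1]
    simp
  | succ r ih =>
    have hmksplit : PowerSeries.mk
          (fun n => (P {ω | ∑ i ∈ Finset.range (r+1), Y i ω = n}).toReal)
        = PowerSeries.mk (fun n => (P {ω | ∑ i ∈ Finset.range r, Y i ω = n}).toReal)
          * PowerSeries.mk (fun n => (μ {ω | waitingTime k ω = n}).toReal) := by
      ext n
      rw [PowerSeries.coeff_mk, PowerSeries.coeff_mul,
        Finset.Nat.sum_antidiagonal_eq_sum_range_succ_mk,
        NB15.conv P Y hYmeas hYindep r n,
        ENNReal.toReal_sum (fun j _ =>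
          ENNReal.mul_ne_top (measure_ne_top P _) (measure_ne_top P _))]
      refine Finset.sum_congr rfl fun j hj => ?_
      rw [ENNReal.toReal_mul, PowerSeries.coeff_mk, PowerSeries.coeff_mk, hYdist r (n-j)]
    have hb := NB15.base hp0 hp1 k hk μ hμ
    set D : PowerSeries ℝ := 1 - PowerSeries.X
      + PowerSeries.C (R := ℝ) ((1 - p) * p ^ k) * PowerSeries.X ^ (k + 1) with hD
    set A : PowerSeries ℝ :=
      PowerSeries.mk (fun n => (μ {ω | waitingTime k ω = n}).toReal) with hA
    set F : PowerSeries ℝ :=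
      PowerSeries.mk (fun n => (P {ω | ∑ i ∈ Finset.range r, Y i ω = n}).toReal) with hF
    rw [hmksplit]
    calc D ^ (r+1) * (F * A) = (D ^ r * F) * (D * A) := by ring
      _ = (PowerSeries.C (R := ℝ) (p ^ (r * k)) * PowerSeries.X ^ (r * k)
            * (1 - PowerSeries.C (R := ℝ) p * PowerSeries.X) ^ r)
          * (PowerSeries.C (R := ℝ) (p ^ k) * PowerSeries.X ^ k
            * (1 - PowerSeries.C (R := ℝ) p * PowerSeries.X)) := by rw [ih, hb]
      _ = PowerSeries.C (R := ℝ) (p ^ ((r+1) * k)) * PowerSeries.X ^ ((r+1) * k)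
          * (1 - PowerSeries.C (R := ℝ) p * PowerSeries.X) ^ (r+1) := by
        rw [show (r+1) * k = r * k + k by ring, pow_add p, map_mul,
          pow_add (PowerSeries.X : PowerSeries ℝ)]
        ring
end

section
/- Fix an integer k ≥ 1 and write g_n(x) = P(N_{n,k} = x), with the convention g_n(x) = 0 for x < 0 and g_m(x) = 0 for m < 0. Then for all integers n > k and x ≥ 0, g_n(x) = g_{n−1}(x) + p^k·g_{n−k}(x−1) − p^k·q·g_{n−k−1}(x) − p^{k+1}·g_{n−k−1}(x−1), together with the initial conditions g_n(x) = 1 if x = 0 and 0 otherwise for 0 ≤ n < k, and g_k(0) = 1 − p^k, g_k(1) = p^k, g_k(x) = 0 for x ≥ 2. -/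
open MeasureTheory Finset

/-- One step of Feller's counting-from-scratch scheme: the state is the pair
`(number of completed runs of length k counted so far, length of the current streak
of successes since the last reset)`.  When the streak reaches `k`, a run is counted
and the counting starts anew from scratch. -/
def fellerAux (k : ℕ) (ω : ℕ → Bool) : ℕ → ℕ × ℕ
  | 0 => (0, 0)
  | n + 1 =>
    let cs := fellerAux k ω n
    if ω (n + 1) = true then
      if cs.2 + 1 = k then (cs.1 + 1, 0) else (cs.1, cs.2 + 1)
    else (cs.1, 0)

/-- `fellerCount k n ω` is `N_{n,k}`: the number of non-overlapping success runs of
length `k` among trials `1, …, n`, counted by Feller's counting-from-scratch scheme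
(equivalently, `∑ⱼ ⌊mⱼ/k⌋` over the maximal success runs `mⱼ`). -/
def fellerCount (k n : ℕ) (ω : ℕ → Bool) : ℕ := (fellerAux k ω n).1

namespace Feller

def stp (k : ℕ) (s : ℕ × ℕ) (b : Bool) : ℕ × ℕ :=
  if b then (if s.2 + 1 = k then (s.1 + 1, 0) else (s.1, s.2 + 1)) else (s.1, 0)

lemma fellerAux_succ (k : ℕ) (ω : ℕ → Bool) (n : ℕ) :
    fellerAux k ω (n + 1) = stp k (fellerAux k ω n) (ω (n + 1)) := by
  cases h : ω (n + 1) <;> simp [fellerAux, stp, h]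

lemma fellerAux_congr (k : ℕ) {ω ω' : ℕ → Bool} : ∀ {n : ℕ},
    (∀ i, 1 ≤ i → i ≤ n → ω i = ω' i) → fellerAux k ω n = fellerAux k ω' n
  | 0, _ => rfl
  | n + 1, h => by
    rw [fellerAux_succ, fellerAux_succ,
      fellerAux_congr k (fun i h1 h2 => h i h1 (h2.trans (Nat.le_succ n))),
      h (n + 1) (by omega) le_rfl]

lemma fellerAux_snd_lt (k : ℕ) (hk : 1 ≤ k) (ω : ℕ → Bool) :
    ∀ n, (fellerAux k ω n).2 < k
  | 0 => hk
  | n + 1 => by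
    rw [fellerAux_succ]
    have := fellerAux_snd_lt k hk ω n
    unfold stp
    split_ifs <;> simp_all <;> omega

lemma fellerAux_le (k : ℕ) (ω : ℕ → Bool) :
    ∀ n, k * (fellerAux k ω n).1 + (fellerAux k ω n).2 ≤ n
  | 0 => by simp [fellerAux]
  | n + 1 => by
    rw [fellerAux_succ]
    have := fellerAux_le k ω n
    unfold stp
    split_ifs with h1 h2 <;> simp_all <;> [skip; omega; omega]
    · rw [Nat.mul_succ]; omega

lemma fellerAux_card (k : ℕ) (ω : ℕ → Bool) :
    ∀ n, k * (fellerAux k ω n).1 + (fellerAux k ω n).2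
      ≤ #((Icc 1 n).filter (fun i => ω i = true))
  | 0 => by simp [fellerAux]
  | n + 1 => by
    have hins : Icc 1 (n + 1) = insert (n + 1) (Icc 1 n) := by
      ext i; simp [Finset.mem_insert, Finset.mem_Icc]; omega
    have hnm : (n + 1) ∉ (Icc 1 n).filter (fun i => ω i = true) := by
      simp [Finset.mem_filter, Finset.mem_Icc]
    have IH := fellerAux_card k ω n
    rw [fellerAux_succ, hins, Finset.filter_insert]
    unfold stp
    cases h : ω (n + 1) with
    | false =>
      simp only [Bool.false_eq_true, if_false]
      omega
    | true =>
      simp only [if_true]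
      rw [Finset.card_insert_of_notMem hnm]
      by_cases hc : (fellerAux k ω n).2 + 1 = k
      · rw [if_pos hc]
        simp only
        rw [Nat.mul_succ]
        omega
      · rw [if_neg hc]
        simp only
        omega

lemma allTrue_lt (k : ℕ) (ω : ℕ → Bool) :
    ∀ m, m < k → (∀ i, 1 ≤ i → i ≤ m → ω i = true) → fellerAux k ω m = (0, m)
  | 0, _, _ => rfl
  | m + 1, hm, h => by
    rw [fellerAux_succ, allTrue_lt k ω m (by omega) (fun i h1 h2 => h i h1 (by omega)),
      h (m + 1) (by omega) le_rfl]
    simp [stp]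
    omega

lemma allTrue_k (k : ℕ) (hk : 1 ≤ k) (ω : ℕ → Bool)
    (h : ∀ i, 1 ≤ i → i ≤ k → ω i = true) : fellerAux k ω k = (1, 0) := by
  obtain ⟨k', rfl⟩ : ∃ k', k = k' + 1 := ⟨k - 1, by omega⟩
  rw [fellerAux_succ, allTrue_lt (k' + 1) ω k' (by omega) (fun i h1 h2 => h i h1 (by omega)),
    h (k' + 1) (by omega) le_rfl]
  simp [stp]

lemma count_k_iff (k : ℕ) (hk : 1 ≤ k) (ω : ℕ → Bool) :
    (fellerAux k ω k).1 = 1 ↔ ∀ i, 1 ≤ i → i ≤ k → ω i = true := by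
  constructor
  · intro h1 i hi1 hik
    have hcard := fellerAux_card k ω k
    rw [h1, mul_one] at hcard
    have hsub : (Icc 1 k).filter (fun i => ω i = true) ⊆ Icc 1 k := Finset.filter_subset _ _
    have hcard2 : #(Icc 1 k) ≤ #((Icc 1 k).filter (fun i => ω i = true)) := by
      rw [Nat.card_Icc]; omega
    have heq := Finset.eq_of_subset_of_card_le hsub hcard2
    have : i ∈ (Icc 1 k).filter (fun i => ω i = true) := by
      rw [heq]; exact Finset.mem_Icc.2 ⟨hi1, hik⟩
    exact (Finset.mem_filter.1 this).2
  · intro h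
    rw [allTrue_k k hk ω h]


noncomputable section

def wt (p : ℝ) (b : Bool) : ℝ := if b then p else 1 - p

def W (p : ℝ) {n : ℕ} (v : Fin n → Bool) : ℝ := ∏ i, wt p (v i)

def ext {n : ℕ} (v : Fin n → Bool) (i : ℕ) : Bool :=
  if h : 1 ≤ i ∧ i ≤ n then v ⟨i - 1, by omega⟩ else false

lemma ext_apply {n : ℕ} (v : Fin n → Bool) (j : Fin n) : ext v (j.1 + 1) = v j := by
  have h : 1 ≤ j.1 + 1 ∧ j.1 + 1 ≤ n := ⟨by omega, j.2⟩
  rw [ext, dif_pos h]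
  exact congrArg v (Fin.ext (by simp))

lemma ext_snoc_agree {n : ℕ} (v : Fin n → Bool) (b : Bool) (i : ℕ) (h1 : 1 ≤ i) (h2 : i ≤ n) :
    ext (Fin.snoc v b : Fin (n + 1) → Bool) i = ext v i := by
  rw [ext, ext, dif_pos ⟨h1, by omega⟩, dif_pos ⟨h1, h2⟩]
  have hlt : i - 1 < n := by omega
  simp [Fin.snoc, hlt]

lemma ext_snoc_last {n : ℕ} (v : Fin n → Bool) (b : Bool) :
    ext (Fin.snoc v b : Fin (n + 1) → Bool) (n + 1) = b := by
  rw [ext, dif_pos ⟨by omega, le_rfl⟩]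
  simp [Fin.snoc]

lemma cnt_snoc {n : ℕ} (k : ℕ) (v : Fin n → Bool) (b : Bool) :
    fellerAux k (ext (Fin.snoc v b : Fin (n + 1) → Bool)) (n + 1)
      = stp k (fellerAux k (ext v) n) b := by
  rw [fellerAux_succ, fellerAux_congr k (fun i h1 h2 => ext_snoc_agree v b i h1 h2),
    ext_snoc_last]

lemma W_snoc (p : ℝ) {n : ℕ} (v : Fin n → Bool) (b : Bool) :
    W p (Fin.snoc v b : Fin (n + 1) → Bool) = W p v * wt p b := by
  rw [W, Fin.prod_univ_castSucc]
  simp [W, Fin.snoc_castSucc]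

lemma sum_snoc {n : ℕ} (f : (Fin (n + 1) → Bool) → ℝ) :
    ∑ w : Fin (n + 1) → Bool, f w
      = ∑ v : Fin n → Bool, (f (Fin.snoc v false) + f (Fin.snoc v true)) := by
  rw [← Equiv.sum_comp (Fin.snocEquiv (fun _ => Bool)) f, Fintype.sum_prod_type_right]
  congr 1
  ext v
  rw [Fintype.sum_bool, add_comm]
  rfl

def F (p : ℝ) (k n c j : ℕ) : ℝ :=
  ∑ v ∈ univ.filter (fun v : Fin n → Bool => fellerAux k (ext v) n = (c, j)), W p v

def A (p : ℝ) (k n x : ℕ) : ℝ :=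
  ∑ v ∈ univ.filter (fun v : Fin n → Bool => (fellerAux k (ext v) n).1 = x), W p v

lemma W_nonneg {p : ℝ} (hp0 : 0 < p) (hp1 : p < 1) {n : ℕ} (v : Fin n → Bool) :
    0 ≤ W p v := by
  refine Finset.prod_nonneg fun i _ => ?_
  rw [wt]; split_ifs <;> linarith

lemma A_nonneg {p : ℝ} (hp0 : 0 < p) (hp1 : p < 1) (k n x : ℕ) : 0 ≤ A p k n x :=
  Finset.sum_nonneg fun v _ => W_nonneg hp0 hp1 v

lemma sum_W (p : ℝ) (n : ℕ) : ∑ v : Fin n → Bool, W p v = 1 := by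
  have h := Finset.prod_univ_sum (fun _ : Fin n => (univ : Finset Bool)) (fun _ b => wt p b)
  rw [Fintype.piFinset_univ] at h
  have hb : ∑ b : Bool, wt p b = 1 := by
    rw [Fintype.sum_bool, wt, wt]
    norm_num
  unfold W
  rw [← h]
  have hb2 : wt p true + wt p false = 1 := by rw [wt, wt]; norm_num
  simp [hb2]

lemma F_zero_val (p : ℝ) (k c j : ℕ) :
    F p k 0 c j = if c = 0 ∧ j = 0 then 1 else 0 := by
  rw [F]
  have h0 : ∀ v : Fin 0 → Bool, fellerAux k (ext v) 0 = (0, 0) := fun _ => rfl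
  split_ifs with h
  · obtain ⟨rfl, rfl⟩ := h
    rw [Finset.filter_true_of_mem (fun v _ => h0 v)]
    simp [W]
  · rw [Finset.filter_false_of_mem, Finset.sum_empty]
    intro v _
    rw [h0 v]
    simp [Prod.ext_iff]
    omega

lemma F_vanish (p : ℝ) (k : ℕ) (hk : 1 ≤ k) (n c j : ℕ) (h : k ≤ j ∨ n < j) :
    F p k n c j = 0 := by
  rw [F, Finset.filter_false_of_mem, Finset.sum_empty]
  intro v _
  intro hEq
  have h1 := fellerAux_snd_lt k hk (ext v) n
  have h2 := fellerAux_le k (ext v) n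
  rw [hEq] at h1 h2
  simp at h1 h2
  omega


lemma F_succ_split (p : ℝ) (k n c j : ℕ) :
    F p k (n + 1) c j = ∑ v : Fin n → Bool,
      ((if stp k (fellerAux k (ext v) n) false = (c, j) then W p v * (1 - p) else 0)
        + (if stp k (fellerAux k (ext v) n) true = (c, j) then W p v * p else 0)) := by
  rw [F, Finset.sum_filter,
    sum_snoc (fun w => if fellerAux k (ext w) (n + 1) = (c, j) then W p w else 0)]
  refine Finset.sum_congr rfl fun v _ => ?_
  rw [cnt_snoc, cnt_snoc, W_snoc, W_snoc, wt, wt]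
  norm_num

lemma F_succ_zero (p : ℝ) (k : ℕ) (hk : 1 ≤ k) (n c : ℕ) :
    F p k (n + 1) c 0
      = (1 - p) * A p k n c + p * (if c = 0 then 0 else F p k n (c - 1) (k - 1)) := by
  rw [F_succ_split, Finset.sum_add_distrib]
  congr 1
  · rw [A, Finset.sum_filter, Finset.mul_sum]
    refine Finset.sum_congr rfl fun v _ => ?_
    have hiff : stp k (fellerAux k (ext v) n) false = (c, 0)
        ↔ (fellerAux k (ext v) n).1 = c := by
      simp [stp, Prod.ext_iff]
    rw [if_congr hiff rfl rfl]
    split_ifs <;> ring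
  · rcases c with _ | c
    · rw [if_pos rfl, mul_zero, Finset.sum_eq_zero]
      intro v _
      rw [if_neg]
      rw [stp]
      simp only [if_true]
      split_ifs with hs <;> simp [Prod.ext_iff] <;> omega
    · have hiff : ∀ s : ℕ × ℕ, (stp k s true = (c + 1, 0) ↔ s = (c, k - 1)) := by
        intro s
        rw [stp]
        simp only [if_true]
        split_ifs with hs <;> simp [Prod.ext_iff] <;> omega
      rw [F, Finset.sum_filter, if_neg (by omega : ¬(c + 1 = 0)), Finset.mul_sum]
      simp only [Nat.add_sub_cancel]
      refine Finset.sum_congr rfl fun v _ => ?_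
      rw [if_congr (hiff _) rfl rfl]
      split_ifs <;> ring

lemma F_succ_pos (p : ℝ) (k : ℕ) {j : ℕ} (hj : j + 1 ≠ k) (n c : ℕ) :
    F p k (n + 1) c (j + 1) = p * F p k n c j := by
  rw [F_succ_split, Finset.sum_add_distrib]
  have h1 : ∑ v : Fin n → Bool,
      (if stp k (fellerAux k (ext v) n) false = (c, j + 1) then W p v * (1 - p) else 0) = 0 := by
    refine Finset.sum_eq_zero fun v _ => ?_
    rw [if_neg]
    simp [stp, Prod.ext_iff]
  rw [h1, zero_add, F, Finset.sum_filter, Finset.mul_sum]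
  refine Finset.sum_congr rfl fun v _ => ?_
  have hiff : stp k (fellerAux k (ext v) n) true = (c, j + 1)
      ↔ fellerAux k (ext v) n = (c, j) := by
    rw [stp]
    simp only [if_true]
    split_ifs with hs <;> simp [Prod.ext_iff] <;> omega
  rw [if_congr hiff rfl rfl]
  split_ifs <;> ring

lemma A_eq_sum_F (p : ℝ) (k : ℕ) (hk : 1 ≤ k) (n x : ℕ) :
    A p k n x = ∑ j ∈ range k, F p k n x j := by
  unfold A F
  simp only [Finset.sum_filter]
  rw [Finset.sum_comm]
  refine Finset.sum_congr rfl fun v _ => ?_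
  by_cases hx : (fellerAux k (ext v) n).1 = x
  · have hcond : ∀ j, (fellerAux k (ext v) n = (x, j)) ↔ ((fellerAux k (ext v) n).2 = j) := by
      intro j; rw [Prod.ext_iff]; simp [hx]
    rw [if_pos hx]
    symm
    calc ∑ j ∈ range k, (if fellerAux k (ext v) n = (x, j) then W p v else 0)
        = ∑ j ∈ range k, (if (fellerAux k (ext v) n).2 = j then W p v else 0) :=
          Finset.sum_congr rfl fun j _ => if_congr (hcond j) rfl rfl
      _ = if (fellerAux k (ext v) n).2 ∈ range k then W p v else 0 := Finset.sum_ite_eq _ _ _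
      _ = W p v := if_pos (mem_range.2 (fellerAux_snd_lt k hk (ext v) n))
  · rw [if_neg hx]
    symm
    refine Finset.sum_eq_zero fun j _ => ?_
    rw [if_neg]
    intro hEq
    exact hx (by rw [hEq])

lemma F_jump (p : ℝ) (k : ℕ) (hk : 1 ≤ k) :
    ∀ j, j < k → ∀ n c, F p k (n + j) c j = p ^ j * F p k n c 0
  | 0, _, n, c => by simp
  | j + 1, hj, n, c => by
    rw [show n + (j + 1) = (n + j) + 1 from rfl, F_succ_pos p k (by omega),
      F_jump p k hk j (by omega) n c, pow_succ]
    ring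

lemma A_succ (p : ℝ) (k : ℕ) (hk : 1 ≤ k) (n x : ℕ) :
    A p k (n + 1) x = F p k (n + 1) x 0 + p * (A p k n x - F p k n x (k - 1)) := by
  obtain ⟨k', rfl⟩ : ∃ k', k = k' + 1 := ⟨k - 1, by omega⟩
  rw [A_eq_sum_F p _ hk, A_eq_sum_F p _ hk, Finset.sum_range_succ' _ k',
    Finset.sum_range_succ]
  have hstep : ∀ j ∈ range k', F p (k' + 1) (n + 1) x (j + 1) = p * F p (k' + 1) n x j := by
    intro j hj
    exact F_succ_pos p _ (by simp only [mem_range] at hj; omega) n x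
  rw [Finset.sum_congr rfl hstep, ← Finset.mul_sum]
  norm_num
  ring


def Az (p : ℝ) (k : ℕ) (n x : ℤ) : ℝ :=
  if 0 ≤ n ∧ 0 ≤ x then A p k n.toNat x.toNat else 0

def Sz (p : ℝ) (k : ℕ) (n x : ℤ) : ℝ :=
  if 0 ≤ n ∧ 0 ≤ x then F p k n.toNat x.toNat 0 else 0

lemma pF_eq (p : ℝ) (k : ℕ) (hk : 1 ≤ k) (t Y : ℕ) :
    p * F p k t Y (k - 1) = p ^ k * Sz p k ((t : ℤ) + 1 - k) (Y : ℤ) := by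
  have hpk : p * p ^ (k - 1) = p ^ k := by
    rw [← pow_succ']
    congr 1
    omega
  by_cases hkt : k ≤ t + 1
  · rw [Sz, if_pos ⟨by omega, by omega⟩,
      show ((t : ℤ) + 1 - k).toNat = t + 1 - k by omega,
      show ((Y : ℤ)).toNat = Y from Int.toNat_natCast Y]
    have ht : t = (t + 1 - k) + (k - 1) := by omega
    rw [ht, F_jump p k hk (k - 1) (by omega) (t + 1 - k) Y, ← mul_assoc, hpk]
    rw [show (t + 1 - k) + (k - 1) + 1 - k = t + 1 - k by omega]
  · rw [Sz, if_neg (by omega), mul_zero,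
      F_vanish p k hk t Y (k - 1) (Or.inr (by omega)), mul_zero]

lemma LE1 (p : ℝ) (k : ℕ) (hk : 1 ≤ k) (m y : ℤ) (hm : 1 ≤ m) :
    Sz p k m y = (1 - p) * Az p k (m - 1) y + p ^ k * Sz p k (m - k) (y - 1) := by
  by_cases hy : 0 ≤ y
  · obtain ⟨t, hmt⟩ : ∃ t, m.toNat = t + 1 := ⟨m.toNat - 1, by omega⟩
    rw [Sz, if_pos ⟨by omega, hy⟩, Az, if_pos ⟨by omega, hy⟩, hmt,
      show (m - 1).toNat = t by omega, F_succ_zero p k hk t y.toNat]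
    congr 1
    by_cases hY : y.toNat = 0
    · rw [if_pos hY, mul_zero, Sz, if_neg (by omega), mul_zero]
    · rw [if_neg hY]
      have h := pF_eq p k hk t (y.toNat - 1)
      rw [show ((y.toNat - 1 : ℕ) : ℤ) = y - 1 by omega,
        show ((t : ℤ) + 1 - k) = m - k by omega] at h
      exact h
  · rw [Sz, if_neg (by omega), Az, if_neg (by omega), Sz, if_neg (by omega)]
    ring

lemma LE2' (p : ℝ) (k : ℕ) (hk : 1 ≤ k) (m y : ℤ) (hm : 1 ≤ m) :
    Az p k m y = Sz p k m y + p * Az p k (m - 1) y - p ^ k * Sz p k (m - k) y := by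
  by_cases hy : 0 ≤ y
  · obtain ⟨t, hmt⟩ : ∃ t, m.toNat = t + 1 := ⟨m.toNat - 1, by omega⟩
    rw [Az, if_pos ⟨by omega, hy⟩, Az, if_pos ⟨by omega, hy⟩, Sz, if_pos ⟨by omega, hy⟩, hmt,
      show (m - 1).toNat = t by omega, A_succ p k hk t y.toNat]
    have h := pF_eq p k hk t y.toNat
    rw [show ((y.toNat : ℕ) : ℤ) = y by omega,
      show ((t : ℤ) + 1 - k) = m - k by omega] at h
    rw [show ((y : ℤ)).toNat = y.toNat from rfl]
    linarith
  · rw [Az, if_neg (by omega), Az, if_neg (by omega), Sz, if_neg (by omega),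
      Sz, if_neg (by omega)]
    ring

lemma LE2 (p : ℝ) (k : ℕ) (hk : 1 ≤ k) (m y : ℤ) (hm : 1 ≤ m) :
    Az p k m y = Az p k (m - 1) y + p ^ k * (Sz p k (m - k) (y - 1) - Sz p k (m - k) y) := by
  have h1 := LE1 p k hk m y hm
  have h2 := LE2' p k hk m y hm
  linarith

lemma A_init (p : ℝ) (k : ℕ) (hk : 1 ≤ k) (n x : ℕ) (hn : n < k) :
    A p k n x = if x = 0 then 1 else 0 := by
  have hc : ∀ v : Fin n → Bool, (fellerAux k (ext v) n).1 = 0 := by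
    intro v
    have h2 := fellerAux_le k (ext v) n
    by_contra hne
    have : k * 1 ≤ k * (fellerAux k (ext v) n).1 := Nat.mul_le_mul_left k (by omega)
    omega
  unfold A
  split_ifs with hx
  · subst hx
    rw [Finset.filter_true_of_mem (fun v _ => hc v)]
    exact sum_W p n
  · rw [Finset.filter_false_of_mem, Finset.sum_empty]
    intro v _
    rw [hc v]
    omega

lemma count_k_le (k : ℕ) (hk : 1 ≤ k) (ω : ℕ → Bool) : (fellerAux k ω k).1 ≤ 1 := by
  have h2 := fellerAux_le k ω k
  by_contra h
  have : k * 2 ≤ k * (fellerAux k ω k).1 := Nat.mul_le_mul_left k (by omega)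
  omega

lemma A_k_two (p : ℝ) (k : ℕ) (hk : 1 ≤ k) (x : ℕ) (hx : 2 ≤ x) : A p k k x = 0 := by
  unfold A
  rw [Finset.filter_false_of_mem, Finset.sum_empty]
  intro v _
  have := count_k_le k hk (ext v)
  omega

lemma A_k_one (p : ℝ) (k : ℕ) (hk : 1 ≤ k) : A p k k 1 = p ^ k := by
  unfold A
  have hset : univ.filter (fun v : Fin k → Bool => (fellerAux k (ext v) k).1 = 1)
      = {fun _ => true} := by
    ext v
    simp only [mem_filter, mem_univ, true_and, Finset.mem_singleton]
    rw [count_k_iff k hk (ext v)]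
    constructor
    · intro h
      funext j
      have hj := h (j.1 + 1) (by omega) (by omega)
      rwa [ext_apply] at hj
    · rintro rfl i h1 h2
      rw [ext, dif_pos ⟨h1, h2⟩]
  rw [hset, Finset.sum_singleton, W]
  simp [wt]

lemma A_k_zero (p : ℝ) (k : ℕ) (hk : 1 ≤ k) : A p k k 0 = 1 - p ^ k := by
  have hsum := Finset.sum_filter_add_sum_filter_not (univ : Finset (Fin k → Bool))
    (fun v => (fellerAux k (ext v) k).1 = 0) (W p)
  rw [sum_W p k] at hsum
  have hnot : univ.filter (fun v : Fin k → Bool => ¬(fellerAux k (ext v) k).1 = 0)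
      = univ.filter (fun v => (fellerAux k (ext v) k).1 = 1) := by
    apply Finset.filter_congr
    intro v _
    have := count_k_le k hk (ext v)
    constructor <;> (intro h; omega)
  rw [hnot] at hsum
  have h1 : A p k k 1 = p ^ k := A_k_one p k hk
  unfold A at h1 ⊢
  linarith


lemma prod_Icc_W (p : ℝ) {n : ℕ} (v : Fin n → Bool) :
    (∏ i ∈ Finset.Icc 1 n, if ext v i = true then p else 1 - p) = W p v := by
  rw [← Finset.Ico_add_one_right_eq_Icc, Finset.prod_Ico_eq_prod_range, Nat.add_sub_cancel]
  rw [W, ← Fin.prod_univ_eq_prod_range (fun i => if ext v (1 + i) = true then p else 1 - p) n]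
  refine Finset.prod_congr rfl fun i _ => ?_
  rw [show 1 + (i : ℕ) = i.1 + 1 from by omega, ext_apply, wt]

end

end Feller

theorem stmt18 (p : ℝ) (hp0 : 0 < p) (hp1 : p < 1) (k : ℕ) (hk : 1 ≤ k)
    (μ : Measure (ℕ → Bool)) [IsProbabilityMeasure μ]
    (hμ : ∀ (n : ℕ) (b : ℕ → Bool),
      μ {ω | ∀ i, 1 ≤ i → i ≤ n → ω i = b i}
        = ENNReal.ofReal (∏ i ∈ Finset.Icc 1 n, if b i = true then p else 1 - p))
    -- `G n x = P(N_{n,k} = x)`, extended by `0` to negative indices.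
    (G : ℤ → ℤ → ℝ) (hGneg : ∀ n x : ℤ, n < 0 ∨ x < 0 → G n x = 0)
    (hGdef : ∀ n x : ℕ, G n x = (μ {ω | fellerCount k n ω = x}).toReal) :
    (∀ (n x : ℕ), k < n →
      G n x = G ((n : ℤ) - 1) x + p ^ k * G ((n : ℤ) - k) ((x : ℤ) - 1)
        - p ^ k * (1 - p) * G ((n : ℤ) - k - 1) x
        - p ^ (k + 1) * G ((n : ℤ) - k - 1) ((x : ℤ) - 1)) ∧
    (∀ (n x : ℕ), n < k → G n x = if x = 0 then 1 else 0) ∧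
    G k 0 = 1 - p ^ k ∧ G k 1 = p ^ k ∧
    (∀ x : ℕ, 2 ≤ x → G k x = 0) := by
  classical
  have key : ∀ (n x : ℕ),
      μ {ω | fellerCount k n ω = x} = ENNReal.ofReal (Feller.A p k n x) := by
    intro n x
    set T : Finset (Fin n → Bool) :=
      univ.filter (fun v => (fellerAux k (Feller.ext v) n).1 = x) with hT
    have hset : {ω : ℕ → Bool | fellerCount k n ω = x}
        = ⋃ v ∈ T, {ω : ℕ → Bool | ∀ i, 1 ≤ i → i ≤ n → ω i = Feller.ext v i} := by
      ext ω
      simp only [Set.mem_setOf_eq, Set.mem_iUnion]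
      constructor
      · intro h
        refine ⟨fun i => ω (i.1 + 1), ?_, ?_⟩
        · rw [hT, mem_filter]
          refine ⟨mem_univ _, ?_⟩
          rw [← Feller.fellerAux_congr k (ω' := Feller.ext fun i : Fin n => ω (i.1 + 1))
            (fun i h1 h2 => by
              rw [Feller.ext, dif_pos ⟨h1, h2⟩]
              show ω i = ω (i - 1 + 1)
              congr 1
              omega)]
          exact h
        · intro i h1 h2
          rw [Feller.ext, dif_pos ⟨h1, h2⟩]
          show ω i = ω (i - 1 + 1)
          congr 1
          omega
      · rintro ⟨v, hv, hcyl⟩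
        rw [hT, mem_filter] at hv
        rw [fellerCount, Feller.fellerAux_congr k hcyl]
        exact hv.2
    have hmeas : ∀ v : Fin n → Bool,
        MeasurableSet {ω : ℕ → Bool | ∀ i, 1 ≤ i → i ≤ n → ω i = Feller.ext v i} := by
      intro v
      have heq : {ω : ℕ → Bool | ∀ i, 1 ≤ i → i ≤ n → ω i = Feller.ext v i}
          = ⋂ i ∈ Finset.Icc 1 n, (fun ω : ℕ → Bool => ω i) ⁻¹' {Feller.ext v i} := by
        ext ω
        simp only [Set.mem_setOf_eq, Set.mem_iInter, Set.mem_preimage, Set.mem_singleton_iff,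
          Finset.mem_Icc]
        constructor
        · intro h i hi
          exact h i hi.1 hi.2
        · intro h i h1 h2
          exact h i ⟨h1, h2⟩
      rw [heq]
      exact MeasurableSet.biInter (Finset.Icc 1 n).countable_toSet
        (fun i _ => measurable_pi_apply i (measurableSet_singleton _))
    have hdisj : (↑T : Set (Fin n → Bool)).PairwiseDisjoint
        (fun v => {ω : ℕ → Bool | ∀ i, 1 ≤ i → i ≤ n → ω i = Feller.ext v i}) := by
      intro v _ v' _ hne
      refine Set.disjoint_left.2 fun ω hv hv' => hne ?_
      funext j
      have e1 := hv (j.1 + 1) (by omega) (by omega)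
      have e2 := hv' (j.1 + 1) (by omega) (by omega)
      rw [Feller.ext_apply] at e1
      rw [Feller.ext_apply] at e2
      rw [← e1, ← e2]
    rw [hset, measure_biUnion_finset hdisj (fun v _ => hmeas v)]
    have hμv : ∀ v ∈ T, μ {ω : ℕ → Bool | ∀ i, 1 ≤ i → i ≤ n → ω i = Feller.ext v i}
        = ENNReal.ofReal (Feller.W p v) := by
      intro v _
      rw [hμ n (Feller.ext v), Feller.prod_Icc_W]
    rw [Finset.sum_congr rfl hμv,
      ← ENNReal.ofReal_sum_of_nonneg (fun v _ => Feller.W_nonneg hp0 hp1 v)]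
    rfl
  have GA : ∀ n x : ℕ, G n x = Feller.A p k n x := by
    intro n x
    rw [hGdef, key, ENNReal.toReal_ofReal (Feller.A_nonneg hp0 hp1 k n x)]
  have GAz : ∀ n x : ℤ, G n x = Feller.Az p k n x := by
    intro n x
    by_cases hn : 0 ≤ n ∧ 0 ≤ x
    · obtain ⟨hn1, hn2⟩ := hn
      rw [Feller.Az, if_pos ⟨hn1, hn2⟩]
      have h := GA n.toNat x.toNat
      rwa [Int.toNat_of_nonneg hn1, Int.toNat_of_nonneg hn2] at h
    · rw [Feller.Az, if_neg hn, hGneg n x (by omega)]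
  refine ⟨?_, ?_, ?_, ?_, ?_⟩
  · intro n x hkn
    simp only [GAz]
    have h1 := Feller.LE2 p k hk (n : ℤ) (x : ℤ) (by omega)
    have h2 := Feller.LE1 p k hk ((n : ℤ) - k) (x : ℤ) (by omega)
    have h3 := Feller.LE1 p k hk ((n : ℤ) - k) ((x : ℤ) - 1) (by omega)
    have h4 := Feller.LE2 p k hk ((n : ℤ) - k) ((x : ℤ) - 1) (by omega)
    linear_combination h1 + p ^ k * h3 - p ^ k * h2 - p ^ k * h4
  · intro n x hnk
    rw [GA n x, Feller.A_init p k hk n x hnk]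
  · have h := GA k 0
    norm_num at h
    rw [h, Feller.A_k_zero p k hk]
  · have h := GA k 1
    norm_num at h
    rw [h, Feller.A_k_one p k hk]
  · intro x hx
    have h := GA k x
    rw [h, Feller.A_k_two p k hk x hx]
end
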